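/- Let σ₃ be the unit normal section of G(3,8) given by the octonionic triple cross product, and let γ_j^ℓ(s) be the geodesic of G(3,8) through e_0∧e_1∧e_2 rotating e_ℓ toward e_j (ℓ ∈ {0,1,2}, j ∈ {3,...,7}, indices mod 3). Then the covariant derivative of σ₃ at t=0 along γ_j^ℓ equals X(e_j, e_{ℓ+1}, e_{ℓ+2}) + δ_{j3} e_ℓ; in particular it vanishes when j = 3. -/

import Mathlib

open scoped RealInnerProductSpace

noncomputable section

abbrev Oct : Type := EuclideanSpace ℝ (Fin 8)

def octe (i : Fin 8) : Oct := EuclideanSpace.single i 1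

def plusTriples : List (Fin 8 × Fin 8 × Fin 8) :=
  [(1,2,3),(1,4,5),(1,7,6),(2,4,6),(2,5,7),(3,4,7),(3,6,5)]

/-- Completely skew-symmetric structure tensor taking the value `+1` on the
triples 123, 145, 176, 246, 257, 347, 365. -/
def eps (i j k : Fin 8) : ℝ :=
  if plusTriples.any (fun t => decide ((i,j,k) = t ∨ (i,j,k) = (t.2.1, t.2.2, t.1) ∨
      (i,j,k) = (t.2.2, t.1, t.2.1))) then 1
  else if plusTriples.any (fun t => decide ((i,j,k) = (t.1, t.2.2, t.2.1) ∨
      (i,j,k) = (t.2.2, t.2.1, t.1) ∨ (i,j,k) = (t.2.1, t.1, t.2.2))) then -1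
  else 0

/-- Structure constants of octonion multiplication:
`e_0 e_i = e_i e_0 = e_i` and `e_i e_j = -δ_ij e_0 + ε_ijk e_k` for `i,j ≥ 1`. -/
def structC (i j k : Fin 8) : ℝ :=
  if i = 0 then (if j = k then 1 else 0)
  else if j = 0 then (if i = k then 1 else 0)
  else (if i = j ∧ k = 0 then (-1:ℝ) else 0) + eps i j k

/-- Octonion multiplication on ℝ⁸. -/
def octMul (x y : Oct) : Oct := WithLp.toLp 2 (fun k => ∑ i, ∑ j, x i * y j * structC i j k)

/-- Octonionic conjugation. -/
def octConj (x : Oct) : Oct := WithLp.toLp 2 (fun k => if k = 0 then x 0 else -(x k))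

/-- The triple cross product `X(u,v,w) = -u(v̄w) + ⟨u,v⟩w + ⟨v,w⟩u - ⟨w,u⟩v`. -/
def X3 (u v w : Oct) : Oct :=
  -octMul u (octMul (octConj v) w) + ⟪u, v⟫ • w + ⟪v, w⟫ • u - ⟪w, u⟫ • v

/-- The double cross product `u × v = uv + ⟨u,v⟩ e_0` (on imaginary octonions). -/
def cross2 (u v : Oct) : Oct := octMul u v + ⟪u, v⟫ • octe 0

/-- The inclusion `Fin 3 → Fin 8`. -/
def l0 (l : Fin 3) : Fin 8 := Fin.castLE (by norm_num) l
def l1 (l : Fin 3) : Fin 8 := Fin.castLE (by norm_num) (l + 1)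
def l2 (l : Fin 3) : Fin 8 := Fin.castLE (by norm_num) (l + 2)

/-- Orthogonal projection of ℝ⁸ onto `(span{e₀,e₁,e₂})^⊥`. -/
def proj012 (x : Oct) : Oct :=
  x - x 0 • octe 0 - x 1 • octe 1 - x 2 • octe 2

lemma octMul_lin (c d : ℝ) (a b y : Oct) :
    octMul (c • a + d • b) y = c • octMul a y + d • octMul b y := by
  ext k
  simp only [octMul, PiLp.toLp_apply, PiLp.add_apply, PiLp.smul_apply, smul_eq_mul, Finset.mul_sum]
  rw [← Finset.sum_add_distrib]
  refine Finset.sum_congr rfl fun i _ => ?_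
  rw [← Finset.sum_add_distrib]
  refine Finset.sum_congr rfl fun j' _ => ?_
  ring

lemma X3_lin (c d : ℝ) (a b v w : Oct) :
    X3 (c • a + d • b) v w = c • X3 a v w + d • X3 b v w := by
  unfold X3
  rw [octMul_lin, inner_add_left, inner_add_right, real_inner_smul_left,
    real_inner_smul_left, real_inner_smul_right, real_inner_smul_right]
  module

lemma myDeriv_eq (A B v w : Oct) :
    deriv (fun s : ℝ => X3 (Real.cos s • A + Real.sin s • B) v w) 0 = X3 B v w := by
  have hfun : (fun s : ℝ => X3 (Real.cos s • A + Real.sin s • B) v w)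
      = fun s : ℝ => Real.cos s • X3 A v w + Real.sin s • X3 B v w :=
    funext fun s => X3_lin _ _ _ _ _ _
  rw [hfun]
  have h1 : HasDerivAt (fun s : ℝ => Real.cos s • X3 A v w + Real.sin s • X3 B v w)
      ((-Real.sin 0) • X3 A v w + Real.cos 0 • X3 B v w) 0 :=
    ((Real.hasDerivAt_cos 0).smul_const _).add ((Real.hasDerivAt_sin 0).smul_const _)
  rw [h1.deriv]
  simp

lemma proj_of_normal (x : Oct) (h0 : x 0 = 0) (h1 : x 1 = 0) (h2 : x 2 = 0) :
    proj012 x = x := by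
  simp [proj012, h0, h1, h2]

set_option maxHeartbeats 2000000 in
lemma X3_three (l : Fin 3) :
    X3 (octe 3) (octe (l1 l)) (octe (l2 l)) = -octe (l0 l) := by
  fin_cases l <;>
  · ext m
    fin_cases m <;>
    simp (config := {decide := true}) [X3, octMul, octConj, octe, structC, eps, plusTriples,
      l0, l1, l2, EuclideanSpace.single_apply, PiLp.toLp_apply, Fin.sum_univ_eight, PiLp.inner_apply,
      RCLike.inner_apply, conj_trivial, PiLp.add_apply, PiLp.smul_apply, PiLp.neg_apply,
      PiLp.sub_apply]

set_option maxHeartbeats 4000000 in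
lemma X3_normal (l : Fin 3) (j : Fin 8) (hj : 4 ≤ (j : ℕ)) (m : Fin 8) (hm : (m : ℕ) < 3) :
    X3 (octe j) (octe (l1 l)) (octe (l2 l)) m = 0 := by
  fin_cases j <;> simp at hj <;> [skip; skip; skip; skip] <;>
  fin_cases l <;> fin_cases m <;> simp at hm <;>
  simp (config := {decide := true}) [X3, octMul, octConj, octe, structC, eps, plusTriples,
    l0, l1, l2, EuclideanSpace.single_apply, PiLp.toLp_apply, Fin.sum_univ_eight, PiLp.inner_apply,
    RCLike.inner_apply, conj_trivial, PiLp.add_apply, PiLp.smul_apply, PiLp.neg_apply,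
    PiLp.sub_apply]

/-- The covariant derivative of `σ₃` at `t = 0` along the geodesic
`γ_j^ℓ(s) = e₀∧…∧(cos s e_ℓ + sin s e_j)∧…∧e₂` of `G(3,8)` (i.e. the
projection onto the normal space at the base point of the usual derivative
of `s ↦ X(cos s e_ℓ + sin s e_j, e_{ℓ+1}, e_{ℓ+2})`, indices mod 3) equals
`X(e_j, e_{ℓ+1}, e_{ℓ+2}) + δ_{j3} e_ℓ`; in particular it vanishes
for `j = 3`. -/
theorem stmt14 (l : Fin 3) (j : Fin 8) (hj : 3 ≤ (j : ℕ)) :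
    proj012 (deriv (fun s : ℝ =>
        X3 (Real.cos s • octe (l0 l) + Real.sin s • octe j)
          (octe (l1 l)) (octe (l2 l))) 0)
      = X3 (octe j) (octe (l1 l)) (octe (l2 l))
          + (if j = 3 then octe (l0 l) else 0) ∧
    (j = 3 →
      proj012 (deriv (fun s : ℝ =>
        X3 (Real.cos s • octe (l0 l) + Real.sin s • octe j)
          (octe (l1 l)) (octe (l2 l))) 0) = 0) := by
  have hD := myDeriv_eq (octe (l0 l)) (octe j) (octe (l1 l)) (octe (l2 l))
  have main : proj012 (X3 (octe j) (octe (l1 l)) (octe (l2 l)))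
      = X3 (octe j) (octe (l1 l)) (octe (l2 l)) + (if j = 3 then octe (l0 l) else 0) := by
    rcases eq_or_ne j 3 with rfl | hne
    · rw [if_pos rfl, X3_three]
      ext m
      fin_cases l <;> fin_cases m <;>
      simp (config := {decide := true}) [proj012, octe, l0, EuclideanSpace.single_apply,
        PiLp.add_apply, PiLp.smul_apply, PiLp.neg_apply, PiLp.sub_apply]
    · have hj4 : 4 ≤ (j : ℕ) := by
        rcases Nat.lt_or_ge (j : ℕ) 4 with h | h
        · exfalso; apply hne
          have h3 : ((3 : Fin 8) : ℕ) = 3 := rfl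
          exact Fin.ext (by omega)
        · exact h
      rw [if_neg hne, add_zero]
      apply proj_of_normal <;>
        exact X3_normal l j hj4 _ (by simp)
  constructor
  · rw [hD]; exact main
  · intro h; subst h
    rw [hD, main, if_pos rfl, X3_three]
    simp
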